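/- Let a, b, c be non-negative integers with b ≤ a and 1 ≤ c < 2^(a−b+1). Then the binomial coefficient C(2^a, c) is divisible by 2^b. -/

import Mathlib

/-- binary digit sum -/
def s2 (n : ℕ) : ℕ := (Nat.digits 2 n).sum

/-- 2-adic valuation -/
def nu (n : ℕ) : ℕ := padicValNat 2 n
theorem stmt1 (a b c : ℕ) (hba : b ≤ a) (hc1 : 1 ≤ c) (hc2 : c < 2 ^ (a - b + 1)) :
    2 ^ b ∣ Nat.choose (2 ^ a) c := by
  rcases Nat.eq_zero_or_pos b with rfl | hb
  · simp
  haveI : Fact (Nat.Prime 2) := ⟨Nat.prime_two⟩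
  have hca : c ≤ 2 ^ a :=
    le_of_lt (lt_of_lt_of_le hc2 (Nat.pow_le_pow_right (by norm_num) (by omega)))
  have hc0 : c ≠ 0 := by omega
  have key := Nat.Prime.emultiplicity_choose_prime_pow_add_emultiplicity
    Nat.prime_two hca hc0
  rw [← padicValNat_eq_emultiplicity (Nat.choose_pos hca).ne',
      ← padicValNat_eq_emultiplicity (by omega : c ≠ 0), ← Nat.cast_add] at key
  have key' : padicValNat 2 (Nat.choose (2 ^ a) c) + padicValNat 2 c = a := by
    exact_mod_cast key
  have hvc : padicValNat 2 c ≤ a - b := by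
    by_contra h
    have h2 : (2 : ℕ) ^ (a - b + 1) ≤ 2 ^ padicValNat 2 c :=
      Nat.pow_le_pow_right (by norm_num) (by omega)
    have := Nat.le_of_dvd (by omega) (pow_padicValNat_dvd (p := 2) (n := c))
    omega
  have hble : b ≤ padicValNat 2 (Nat.choose (2 ^ a) c) := by omega
  exact dvd_trans (pow_dvd_pow 2 hble) pow_padicValNat_dvd
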